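/- Let L be a positive integer and let p_1, …, p_L be pairwise coprime positive integers. The map from the product ∏_{ℓ=1}^L ZMod p_ℓ to ZMod (∏_{ℓ=1}^L p_ℓ) sending (v_1,…,v_L) to ∑_{ℓ=1}^L v_ℓ · ∏_{ℓ'≠ℓ} p_{ℓ'} (where each v_ℓ is lifted to an integer and the sum is taken modulo ∏_ℓ p_ℓ) is well defined and bijective. -/

import Mathlib

/-- For pairwise coprime positive moduli `p 1, …, p L`, the simplified superposition map
from `∀ ℓ, ZMod (p ℓ)` to `ZMod (∏ ℓ, p ℓ)` sending `(v 1, …, v L)` to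
`∑ ℓ, v ℓ * ∏_{ℓ' ≠ ℓ} p ℓ'` (each `v ℓ` lifted to an integer, sum taken modulo the
product) is bijective. -/
theorem stmt3 (L : ℕ) (hL : 0 < L) (p : Fin L → ℕ) (hp : ∀ ℓ, 0 < p ℓ)
    (hcop : ∀ i j, i ≠ j → Nat.Coprime (p i) (p j)) :
    Function.Bijective (fun v : ∀ i : Fin L, ZMod (p i) =>
      (((∑ i, ((v i).val : ℤ) * ∏ j ∈ Finset.univ.erase i, (p j : ℤ)) : ℤ) :
        ZMod (∏ ℓ, p ℓ))) := by
  haveI : ∀ i, NeZero (p i) := fun i => ⟨(hp i).ne'⟩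
  haveI : NeZero (∏ ℓ, p ℓ) := ⟨(Finset.prod_pos fun i _ => hp i).ne'⟩
  rw [Fintype.bijective_iff_injective_and_card]
  constructor
  · intro v w h
    funext k
    have hdvd : p k ∣ ∏ ℓ, p ℓ := Finset.dvd_prod_of_mem _ (Finset.mem_univ k)
    have h2 := congrArg (ZMod.castHom hdvd (ZMod (p k))) h
    simp only [map_intCast] at h2
    have key : ∀ u : ∀ i, ZMod (p i),
        (((∑ i, ((u i).val : ℤ) * ∏ j ∈ Finset.univ.erase i, (p j : ℤ)) : ℤ) : ZMod (p k))
          = u k * ∏ j ∈ Finset.univ.erase k, (p j : ZMod (p k)) := by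
      intro u
      push_cast
      rw [Finset.sum_eq_single k]
      · simp [ZMod.natCast_val, ZMod.cast_id]
      · intro i _ hik
        have h0 : ((p k : ZMod (p k))) = 0 := ZMod.natCast_self _
        rw [Finset.prod_eq_zero (Finset.mem_erase.mpr ⟨Ne.symm hik, Finset.mem_univ k⟩) h0,
          mul_zero]
      · simp
    rw [key v, key w] at h2
    have hunit : IsUnit (∏ j ∈ Finset.univ.erase k, (p j : ZMod (p k))) := by
      rw [← Nat.cast_prod, ZMod.isUnit_iff_coprime]
      exact Nat.Coprime.prod_left fun j hj => hcop j k (Finset.mem_erase.mp hj).1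
    obtain ⟨u, hu⟩ := hunit
    have := congrArg (fun x => x * (↑u⁻¹ : ZMod (p k))) h2
    simpa [← hu, mul_assoc] using this
  · simp [Fintype.card_pi, ZMod.card]
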